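/- For a simple graph G on N ≥ 2 vertices, the variance of S_N(π) = ∑_{i=1}^N A_{i,π(i)} over a uniformly random permutation π equals ∑_{i=1}^N d_i(N − d_i)/N² + ∑_{i ≠ j} (d_i d_j − N T_{i,j})/(N²(N−1)), where d_i is the degree of vertex i and T_{i,j} is the scalar product of rows i and j of A. -/

import Mathlib

/-- The `(x,y)` entry of the adjacency matrix of `G`, as a rational number. -/
def adjQ (N : ℕ) (G : SimpleGraph (Fin N)) [DecidableRel G.Adj] (x y : Fin N) : ℚ :=
  if G.Adj x y then 1 else 0

open Finset Equiv

variable {α : Type*} [Fintype α] [DecidableEq α]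

lemma exists_perm_pair (a b a' b' : α) (hab : a ≠ b) (hab' : a' ≠ b') :
    ∃ σ : Perm α, σ a = a' ∧ σ b = b' := by
  refine ⟨Equiv.swap (Equiv.swap a a' b) b' * Equiv.swap a a', ?_, ?_⟩
  · simp only [Perm.mul_apply, Equiv.swap_apply_left]
    rw [Equiv.swap_apply_of_ne_of_ne]
    · intro h
      exact hab ((Equiv.swap a a').injective (by simpa [Equiv.swap_apply_left] using h))
    · exact hab'
  · simp only [Perm.mul_apply, Equiv.swap_apply_left]

lemma fiber_single_card (i a b : α) :
    (univ.filter fun π : Perm α => π i = a).card =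
    (univ.filter fun π : Perm α => π i = b).card := by
  apply Finset.card_bij' (fun π _ => Equiv.swap a b * π) (fun π _ => Equiv.swap a b * π)
  · intro π hπ
    simp only [mem_filter, mem_univ, true_and] at *
    simp [Perm.mul_apply, hπ]
  · intro π hπ
    simp only [mem_filter, mem_univ, true_and] at *
    simp [Perm.mul_apply, hπ, Equiv.swap_apply_right]
  · intro π _; simp [← mul_assoc]
  · intro π _; simp [← mul_assoc]

lemma fiber_pair_card (i j : α) {a b a' b' : α} (hab : a ≠ b) (hab' : a' ≠ b') :
    (univ.filter fun π : Perm α => π i = a ∧ π j = b).card =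
    (univ.filter fun π : Perm α => π i = a' ∧ π j = b').card := by
  obtain ⟨σ, hσa, hσb⟩ := exists_perm_pair a b a' b' hab hab'
  apply Finset.card_bij' (fun π _ => σ * π) (fun π _ => σ⁻¹ * π)
  · intro π hπ
    simp only [mem_filter, mem_univ, true_and] at *
    simp [Perm.mul_apply, hπ.1, hπ.2, hσa, hσb]
  · intro π hπ
    simp only [mem_filter, mem_univ, true_and] at *
    constructor
    · simp [Perm.mul_apply, hπ.1, ← hσa]
    · simp [Perm.mul_apply, hπ.2, ← hσb]
  · intro π _; simp [← mul_assoc]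
  · intro π _; simp [← mul_assoc]

lemma sum_perm_single (i : α) (f : α → ℚ) :
    (Fintype.card α : ℚ) * ∑ π : Perm α, f (π i) =
      (Nat.factorial (Fintype.card α) : ℚ) * ∑ a, f a := by
  set c := (univ.filter fun π : Perm α => π i = i).card with hc
  have hfib : ∀ a : α, (univ.filter fun π : Perm α => π i = a).card = c :=
    fun a => fiber_single_card i a i
  have h1 : ∑ π : Perm α, f (π i) = (c : ℚ) * ∑ a, f a := by
    rw [← Finset.sum_fiberwise_of_maps_to (g := fun π : Perm α => π i)
      (t := (univ : Finset α)) (fun π _ => mem_univ _)]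
    rw [Finset.mul_sum]
    refine Finset.sum_congr rfl fun a _ => ?_
    rw [Finset.sum_congr rfl (fun π hπ => by
      rw [(Finset.mem_filter.1 hπ).2]), Finset.sum_const, hfib a, nsmul_eq_mul]
  have h2 : Nat.factorial (Fintype.card α) = c * Fintype.card α := by
    rw [← Fintype.card_perm, ← Finset.card_univ,
      Finset.card_eq_sum_card_fiberwise (f := fun π : Perm α => π i)
        (t := (univ : Finset α)) (fun π _ => mem_univ _)]
    simp [hfib, Finset.sum_const, mul_comm]
  rw [h1, h2]
  push_cast
  ring

lemma sum_perm_pair (i j : α) (hij : i ≠ j) (f : α × α → ℚ) :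
    (Fintype.card α : ℚ) * ((Fintype.card α : ℚ) - 1) * ∑ π : Perm α, f (π i, π j) =
      (Nat.factorial (Fintype.card α) : ℚ) *
        ∑ p ∈ univ.filter (fun p : α × α => p.1 ≠ p.2), f p := by
  set c := (univ.filter fun π : Perm α => π i = i ∧ π j = j).card with hc
  have hmaps : ∀ π : Perm α, π ∈ (univ : Finset (Perm α)) →
      (π i, π j) ∈ univ.filter (fun p : α × α => p.1 ≠ p.2) := by
    intro π _
    simp only [mem_filter, mem_univ, true_and]
    exact fun h => hij (π.injective h)
  have hfib : ∀ p : α × α, p.1 ≠ p.2 →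
      (univ.filter fun π : Perm α => (π i, π j) = p).card = c := by
    intro p hp
    have : (univ.filter fun π : Perm α => (π i, π j) = p) =
        (univ.filter fun π : Perm α => π i = p.1 ∧ π j = p.2) := by
      apply Finset.filter_congr; intro π _; constructor
      · intro h; exact ⟨congrArg Prod.fst h, congrArg Prod.snd h⟩
      · intro h; rw [h.1, h.2]
    rw [this]
    exact fiber_pair_card i j hp hij
  have h1 : ∑ π : Perm α, f (π i, π j) =
      (c : ℚ) * ∑ p ∈ univ.filter (fun p : α × α => p.1 ≠ p.2), f p := by
    rw [← Finset.sum_fiberwise_of_maps_to (g := fun π : Perm α => (π i, π j)) hmaps]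
    rw [Finset.mul_sum]
    refine Finset.sum_congr rfl fun p hp => ?_
    rw [Finset.sum_congr rfl (fun π hπ => by
      rw [(Finset.mem_filter.1 hπ).2]), Finset.sum_const,
      hfib p (Finset.mem_filter.1 hp).2, nsmul_eq_mul]
  have hoffcard : ((univ.filter (fun p : α × α => p.1 ≠ p.2)).card : ℚ) =
      (Fintype.card α : ℚ) * ((Fintype.card α : ℚ) - 1) := by
    have hd : (univ.filter (fun p : α × α => p.1 = p.2)).card = Fintype.card α := by
      rw [← Finset.univ_product_univ, ← Finset.diag_eq_filter, Finset.diag_card, Finset.card_univ]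
    have := Finset.card_filter_add_card_filter_not
      (s := (univ : Finset (α × α))) (p := fun p : α × α => p.1 = p.2)
    rw [hd, Finset.card_univ, Fintype.card_prod] at this
    have : (univ.filter (fun p : α × α => ¬ p.1 = p.2)).card =
        Fintype.card α * Fintype.card α - Fintype.card α := by omega
    rw [show (univ.filter (fun p : α × α => p.1 ≠ p.2)).card =
        Fintype.card α * Fintype.card α - Fintype.card α from this]
    have hle : Fintype.card α ≤ Fintype.card α * Fintype.card α := by
      rcases Nat.eq_zero_or_pos (Fintype.card α) with h | h
      · simp [h]
      · exact Nat.le_mul_of_pos_left _ h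
    push_cast [Nat.cast_sub hle]
    ring
  have h2 : (Nat.factorial (Fintype.card α) : ℚ) =
      (c : ℚ) * ((Fintype.card α : ℚ) * ((Fintype.card α : ℚ) - 1)) := by
    have : Nat.factorial (Fintype.card α) =
        c * (univ.filter (fun p : α × α => p.1 ≠ p.2)).card := by
      rw [← Fintype.card_perm, ← Finset.card_univ (α := Perm α),
        Finset.card_eq_sum_card_fiberwise (f := fun π : Perm α => (π i, π j)) hmaps]
      rw [Finset.sum_congr rfl (fun p hp => hfib p (Finset.mem_filter.1 hp).2),
        Finset.sum_const, smul_eq_mul, mul_comm]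
    rw [this]
    push_cast
    rw [hoffcard]
  rw [h1, h2]
  ring

theorem variance_formula (N : ℕ) (hN : 2 ≤ N) (G : SimpleGraph (Fin N))
    [DecidableRel G.Adj] :
    (∑ π : Equiv.Perm (Fin N), (∑ i, adjQ N G i (π i)) ^ 2) / (Nat.factorial N : ℚ) -
        ((∑ π : Equiv.Perm (Fin N), ∑ i, adjQ N G i (π i)) / (Nat.factorial N : ℚ)) ^ 2 =
      (∑ i, (G.degree i : ℚ) * ((N : ℚ) - (G.degree i : ℚ))) / (N : ℚ) ^ 2 +
        (∑ p ∈ Finset.univ.filter (fun p : Fin N × Fin N => p.1 ≠ p.2),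
            ((G.degree p.1 : ℚ) * (G.degree p.2 : ℚ) -
              (N : ℚ) * ∑ k, adjQ N G p.1 k * adjQ N G p.2 k)) /
          ((N : ℚ) ^ 2 * ((N : ℚ) - 1)) := by
  classical
  have hn0 : (N : ℚ) ≠ 0 := Nat.cast_ne_zero.mpr (by omega)
  have hn2 : (2 : ℚ) ≤ (N : ℚ) := by exact_mod_cast hN
  have hn1 : (N : ℚ) - 1 ≠ 0 := by linarith
  have hQ0 : (Nat.factorial N : ℚ) ≠ 0 :=
    Nat.cast_ne_zero.mpr (Nat.factorial_ne_zero N)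
  set n : ℚ := (N : ℚ) with hn
  set Q : ℚ := (Nat.factorial N : ℚ) with hQ
  set D : Fin N → ℚ := fun i => ∑ a, adjQ N G i a with hD
  set off : Finset (Fin N × Fin N) :=
    Finset.univ.filter (fun p : Fin N × Fin N => p.1 ≠ p.2) with hoff
  -- splitting a double sum into diagonal and off-diagonal parts
  have hsplit : ∀ h : Fin N → Fin N → ℚ, (∑ i, ∑ j, h i j) =
      (∑ i, h i i) + ∑ p ∈ off, h p.1 p.2 := by
    intro h
    rw [← Finset.sum_product', Finset.univ_product_univ,
      ← Finset.sum_filter_add_sum_filter_not Finset.univ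
        (fun p : Fin N × Fin N => p.1 = p.2)]
    congr 1
    rw [Finset.sum_filter, Fintype.sum_prod_type]
    simp [Finset.sum_ite_eq]
  -- adjQ is idempotent
  have hidem : ∀ i x, adjQ N G i x * adjQ N G i x = adjQ N G i x := by
    intro i x
    simp only [adjQ]
    split <;> norm_num
  -- degree equals row sum
  have hdeg : ∀ i, (G.degree i : ℚ) = D i := by
    intro i
    simp only [hD, adjQ]
    rw [Finset.sum_boole]
    simp [SimpleGraph.degree, SimpleGraph.neighborFinset_eq_filter]
  -- single-point permutation sums
  have hsingle : ∀ i, n * ∑ π : Perm (Fin N), adjQ N G i (π i) = Q * D i := by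
    intro i
    have := sum_perm_single (α := Fin N) i (fun a => adjQ N G i a)
    rwa [Fintype.card_fin] at this
  -- first moment
  have hE1 : n * (∑ π : Perm (Fin N), ∑ i, adjQ N G i (π i)) =
      Q * ∑ i, D i := by
    rw [Finset.sum_comm, Finset.mul_sum, Finset.mul_sum]
    exact Finset.sum_congr rfl fun i _ => hsingle i
  -- pair sums
  have hpair : ∀ p : Fin N × Fin N, p.1 ≠ p.2 →
      n * (n - 1) * ∑ π : Perm (Fin N), adjQ N G p.1 (π p.1) * adjQ N G p.2 (π p.2) =
        Q * (D p.1 * D p.2 - ∑ k, adjQ N G p.1 k * adjQ N G p.2 k) := by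
    intro p hp
    have h := sum_perm_pair (α := Fin N) p.1 p.2 hp
      (fun q => adjQ N G p.1 q.1 * adjQ N G p.2 q.2)
    rw [Fintype.card_fin] at h
    rw [h]
    congr 1
    have hs := hsplit (fun a b => adjQ N G p.1 a * adjQ N G p.2 b)
    have hfull : (∑ a, ∑ b, adjQ N G p.1 a * adjQ N G p.2 b) = D p.1 * D p.2 := by
      rw [← Finset.sum_mul_sum]
    simp only [hfull] at hs
    linarith
  -- second moment
  have hE2 : n * (n - 1) * (∑ π : Perm (Fin N), (∑ i, adjQ N G i (π i)) ^ 2) =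
      (n - 1) * (Q * ∑ i, D i) +
        Q * ∑ p ∈ off, (D p.1 * D p.2 - ∑ k, adjQ N G p.1 k * adjQ N G p.2 k) := by
    have e1 : ∀ π : Perm (Fin N), (∑ i, adjQ N G i (π i)) ^ 2 =
        ∑ i, ∑ j, adjQ N G i (π i) * adjQ N G j (π j) := by
      intro π
      rw [sq, Finset.sum_mul_sum]
    rw [Finset.sum_congr rfl fun π _ => e1 π]
    have e2 : (∑ π : Perm (Fin N), ∑ i, ∑ j, adjQ N G i (π i) * adjQ N G j (π j)) =
        ∑ i, ∑ j, ∑ π : Perm (Fin N), adjQ N G i (π i) * adjQ N G j (π j) := by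
      rw [Finset.sum_comm]
      exact Finset.sum_congr rfl fun i _ => Finset.sum_comm
    rw [e2, hsplit (fun i j => ∑ π : Perm (Fin N), adjQ N G i (π i) * adjQ N G j (π j))]
    have ediag : (∑ i, ∑ π : Perm (Fin N), adjQ N G i (π i) * adjQ N G i (π i)) =
        ∑ i, ∑ π : Perm (Fin N), adjQ N G i (π i) := by
      exact Finset.sum_congr rfl fun i _ =>
        Finset.sum_congr rfl fun π _ => hidem i (π i)
    rw [mul_add, ediag]
    congr 1
    · rw [Finset.mul_sum, Finset.mul_sum, Finset.mul_sum]
      refine Finset.sum_congr rfl fun i _ => ?_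
      rw [show n * (n - 1) * ∑ π : Perm (Fin N), adjQ N G i (π i) =
        (n - 1) * (n * ∑ π : Perm (Fin N), adjQ N G i (π i)) from by ring, hsingle i]
    · rw [Finset.mul_sum, Finset.mul_sum]
      refine Finset.sum_congr rfl fun p hp => ?_
      exact hpair p (Finset.mem_filter.1 hp).2
  -- rewrite the goal
  have hS : (∑ π : Perm (Fin N), ∑ i, adjQ N G i (π i)) = Q * (∑ i, D i) / n := by
    field_simp
    linarith [hE1]
  have hS2 : (∑ π : Perm (Fin N), (∑ i, adjQ N G i (π i)) ^ 2) =
      ((n - 1) * (Q * ∑ i, D i) +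
        Q * ∑ p ∈ off, (D p.1 * D p.2 - ∑ k, adjQ N G p.1 k * adjQ N G p.2 k)) /
        (n * (n - 1)) := by
    rw [eq_div_iff (by exact mul_ne_zero hn0 hn1)]
    linarith [hE2]
  rw [hS, hS2]
  simp only [hdeg]
  have hP : (∑ p ∈ off, (D p.1 * D p.2 - ∑ k, adjQ N G p.1 k * adjQ N G p.2 k)) =
      (∑ p ∈ off, D p.1 * D p.2) -
        ∑ p ∈ off, ∑ k, adjQ N G p.1 k * adjQ N G p.2 k :=
    Finset.sum_sub_distrib _ _
  have hP2 : (∑ p ∈ off, (D p.1 * D p.2 - n * ∑ k, adjQ N G p.1 k * adjQ N G p.2 k)) =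
      (∑ p ∈ off, D p.1 * D p.2) -
        n * ∑ p ∈ off, ∑ k, adjQ N G p.1 k * adjQ N G p.2 k := by
    rw [Finset.sum_sub_distrib, Finset.mul_sum]
  have hsq : (∑ i, D i) ^ 2 = (∑ i, D i ^ 2) + ∑ p ∈ off, D p.1 * D p.2 := by
    have := hsplit (fun a b => D a * D b)
    rw [← Finset.sum_mul_sum] at this
    rw [sq]
    rw [this]
    congr 1
    exact Finset.sum_congr rfl fun i _ => (sq (D i)).symm ▸ rfl
  have hfirst : (∑ i, D i * (n - D i)) = n * (∑ i, D i) - ∑ i, D i ^ 2 := by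
    have e : (∑ i, D i * (n - D i)) = ∑ i, (n * D i - D i ^ 2) :=
      Finset.sum_congr rfl fun i _ => by ring
    rw [e, Finset.sum_sub_distrib, Finset.mul_sum]
  rw [hfirst, hP, hP2]
  have hsq' : (∑ i, D i ^ 2) = (∑ i, D i) ^ 2 - ∑ p ∈ off, D p.1 * D p.2 := by
    linarith [hsq]
  rw [hsq']
  field_simp
  ring
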